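/- arXiv:2212.07247 — 4 statements merged into one kernel-verified Lean document; each statement's English description precedes it below -/
import Mathlib

section
/- Let k be a field of characteristic zero, L = sl2(k) with standard basis (e, h, f), and V a finite-dimensional representation of L. For each integer μ let V(μ) denote the h-weight space {v ∈ V | h·v = μv}. Then the action of e restricts to a linear isomorphism from V(-1) onto V(1). -/
open LieModule Module

section Aux

variable {k L V : Type*} [Field k] [CharZero k]
    [LieRing L] [LieAlgebra k L]
    [AddCommGroup V] [Module k V] [LieRingModule L V] [LieModule k L V]
    [FiniteDimensional k V]
    {h e f : L}

lemma sl2_aux_mapsTo (ht : IsSl2Triple h e f) :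
    Set.MapsTo (toEnd k L V e)
      (End.eigenspace (toEnd k L V h) (-1) : Set V)
      (End.eigenspace (toEnd k L V h) 1 : Set V) := by
  intro v hv
  rw [SetLike.mem_coe, End.mem_eigenspace_iff] at hv ⊢
  have hv' : ⁅h, v⁆ = (-1 : k) • v := hv
  have h2 : ⁅h, e⁆ = (2 : k) • e := ht.lie_h_e_smul k
  show ⁅h, ⁅e, v⁆⁆ = (1 : k) • ⁅e, v⁆
  rw [leibniz_lie, h2, hv', smul_lie, lie_smul]
  module

lemma sl2_aux_injOn (ht : IsSl2Triple h e f) :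
    Set.InjOn (toEnd k L V e)
      (End.eigenspace (toEnd k L V h) (-1) : Set V) := by
  intro v hv w hw hvw
  rw [SetLike.mem_coe, End.mem_eigenspace_iff] at hv hw
  by_contra hne
  have hvw0 : v - w ≠ 0 := sub_ne_zero.mpr hne
  have P : ht.HasPrimitiveVectorWith (v - w) (-1 : k) :=
    { ne_zero := hvw0
      lie_h := by
        have hv' : ⁅h, v⁆ = (-1 : k) • v := hv
        have hw' : ⁅h, w⁆ = (-1 : k) • w := hw
        rw [lie_sub, hv', hw']; module
      lie_e := by
        have : ⁅e, v⁆ = ⁅e, w⁆ := hvw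
        simp [lie_sub, this] }
  obtain ⟨n, hn⟩ := P.exists_nat
  have : ((-1 : ℤ) : k) = ((n : ℤ) : k) := by push_cast; exact_mod_cast hn
  have := Int.cast_injective (α := k) this
  omega

lemma sl2_aux_injOn' (ht : IsSl2Triple h e f) :
    Set.InjOn (toEnd k L V f)
      (End.eigenspace (toEnd k L V h) 1 : Set V) := by
  intro v hv w hw hvw
  rw [SetLike.mem_coe, End.mem_eigenspace_iff] at hv hw
  by_contra hne
  have hvw0 : v - w ≠ 0 := sub_ne_zero.mpr hne
  have P : ht.symm.HasPrimitiveVectorWith (v - w) (-1 : k) :=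
    { ne_zero := hvw0
      lie_h := by
        have hv' : ⁅h, v⁆ = (1 : k) • v := hv
        have hw' : ⁅h, w⁆ = (1 : k) • w := hw
        rw [neg_lie, lie_sub, hv', hw']; module
      lie_e := by
        have : ⁅f, v⁆ = ⁅f, w⁆ := hvw
        simp [lie_sub, this] }
  obtain ⟨n, hn⟩ := P.exists_nat
  have : ((-1 : ℤ) : k) = ((n : ℤ) : k) := by push_cast; exact_mod_cast hn
  have := Int.cast_injective (α := k) this
  omega

lemma sl2_aux_mapsTo' (ht : IsSl2Triple h e f) :
    Set.MapsTo (toEnd k L V f)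
      (End.eigenspace (toEnd k L V h) 1 : Set V)
      (End.eigenspace (toEnd k L V h) (-1) : Set V) := by
  intro v hv
  rw [SetLike.mem_coe, End.mem_eigenspace_iff] at hv ⊢
  have hv' : ⁅h, v⁆ = (1 : k) • v := hv
  have h2 : ⁅h, f⁆ = -((2 : k) • f) := ht.lie_lie_smul_f k
  show ⁅h, ⁅f, v⁆⁆ = (-1 : k) • ⁅f, v⁆
  rw [leibniz_lie, h2, hv', lie_smul, neg_lie, smul_lie]
  module

end Aux

/-- For a finite-dimensional representation `V` of `sl₂` over a field of characteristic
zero, the action of `e` restricts to a linear isomorphism (a bijection, linear since it is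
the restriction of a linear map) from the `h`-weight space `V(-1)` onto `V(1)`. -/
theorem sl2_e_bijOn_weight_neg_one_one
    {k L V : Type*} [Field k] [CharZero k]
    [LieRing L] [LieAlgebra k L]
    [AddCommGroup V] [Module k V] [LieRingModule L V] [LieModule k L V]
    [FiniteDimensional k V]
    {h e f : L} (ht : IsSl2Triple h e f) :
    Set.BijOn (LieModule.toEnd k L V e)
      (Module.End.eigenspace (LieModule.toEnd k L V h) (-1) : Set V)
      (Module.End.eigenspace (LieModule.toEnd k L V h) 1 : Set V) := by
  set Wm := Module.End.eigenspace (LieModule.toEnd k L V h) (-1)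
  set Wp := Module.End.eigenspace (LieModule.toEnd k L V h) 1
  have hmaps := sl2_aux_mapsTo (k := k) (V := V) ht
  have hinj := sl2_aux_injOn (k := k) (V := V) ht
  -- restricted linear maps
  let E : Wm →ₗ[k] Wp := (toEnd k L V e).restrict hmaps
  let F : Wp →ₗ[k] Wm := (toEnd k L V f).restrict (sl2_aux_mapsTo' (k := k) (V := V) ht)
  have hEinj : Function.Injective E := by
    intro x y hxy
    ext1
    exact hinj x.2 y.2 (congrArg Subtype.val hxy)
  have hFinj : Function.Injective F := by
    intro x y hxy
    ext1
    exact sl2_aux_injOn' (k := k) (V := V) ht x.2 y.2 (congrArg Subtype.val hxy)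
  have hle1 : Module.finrank k Wm ≤ Module.finrank k Wp :=
    LinearMap.finrank_le_finrank_of_injective hEinj
  have hle2 : Module.finrank k Wp ≤ Module.finrank k Wm :=
    LinearMap.finrank_le_finrank_of_injective hFinj
  have hEsurj : Function.Surjective E :=
    (LinearMap.injective_iff_surjective_of_finrank_eq_finrank (le_antisymm hle1 hle2)).mp hEinj
  refine ⟨hmaps, hinj, ?_⟩
  intro w hw
  obtain ⟨⟨v, hv⟩, hvw⟩ := hEsurj ⟨w, hw⟩
  exact ⟨v, hv, congrArg Subtype.val hvw⟩
end

section
/- Let k be a field of characteristic zero and V a finite-dimensional representation of sl2(k) with standard basis (e, h, f). Then the kernel of the action of e on V is contained in the sum of the h-weight spaces V(μ) with μ ≥ 0. -/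
open Polynomial Module Finset

attribute [local instance 100] LieRing.ofAssociativeRing

/-- Basic commutation identity in an associative algebra. -/
private lemma sl2_aux_comm {k V : Type*} [Field k] [AddCommGroup V] [Module k V]
    {E F H : Module.End k V}
    (hEF : E * F = F * E + H) (hHF : H * F = F * H - (2:k) • F) (n : ℕ) :
    E * F ^ (n + 1) = F ^ (n + 1) * E + ((n : k) + 1) • (F ^ n * (H - (n : k) • 1)) := by
  induction n with
  | zero => simp [hEF]
  | succ n ih =>
    have h1 : (H - (n : k) • 1) * F = F * H - ((n : k) + 2) • F := by
      rw [sub_mul, hHF, smul_mul_assoc, one_mul]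
      module
    calc E * F ^ (n + 2) = (E * F ^ (n + 1)) * F := by
          rw [pow_succ, ← mul_assoc]
      _ = F ^ (n + 1) * (E * F) + ((n : k) + 1) • (F ^ n * ((H - (n : k) • 1) * F)) := by
          rw [ih]; simp only [add_mul, smul_mul_assoc, mul_assoc]
      _ = F ^ (n + 1) * (F * E + H) + ((n : k) + 1) • (F ^ n * (F * H - ((n : k) + 2) • F)) := by
          rw [hEF, h1]
      _ = F ^ (n + 2) * E + ((n + 1 : ℕ) + 1 : k) • (F ^ (n + 1) * (H - ((n + 1 : ℕ) : k) • 1)) := by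
          push_cast
          simp only [mul_add, mul_sub, mul_smul_comm, mul_one, ← mul_assoc, ← pow_succ]
          module

/-- Commutation of `H` with powers of `F`. -/
private lemma sl2_aux_HF {k V : Type*} [Field k] [AddCommGroup V] [Module k V]
    {F H : Module.End k V}
    (hHF : H * F = F * H - (2:k) • F) (n : ℕ) :
    H * F ^ n = F ^ n * H - (2 * n : k) • F ^ n := by
  induction n with
  | zero => simp
  | succ n ih =>
    calc H * F ^ (n + 1) = (H * F ^ n) * F := by rw [pow_succ, ← mul_assoc]
      _ = F ^ n * (H * F) - (2 * n : k) • F ^ (n + 1) := by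
          rw [ih, sub_mul, mul_assoc, smul_mul_assoc, ← pow_succ]
      _ = F ^ (n + 1) * H - (2 * (n + 1 : ℕ) : k) • F ^ (n + 1) := by
          rw [hHF]
          push_cast
          simp only [mul_sub, mul_smul_comm, ← mul_assoc, ← pow_succ]
          module

/-- The kernel of the evaluation at the product of the distinct linear factors
`X - i`, `i < n`, is contained in the sum of the corresponding eigenspaces. -/
private lemma sl2_aux_ker_prod {k V : Type*} [Field k] [CharZero k]
    [AddCommGroup V] [Module k V] (H : Module.End k V) (n : ℕ) :
    LinearMap.ker (aeval H (∏ i ∈ Finset.range n, (X - C (i : k)))) ≤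
      ⨆ μ : ℤ, ⨆ _ : 0 ≤ μ, Module.End.eigenspace H (μ : k) := by
  induction n with
  | zero =>
    intro v hv
    have hv' : v = 0 := by simpa using hv
    rw [hv']
    exact Submodule.zero_mem _
  | succ n ih =>
    have hcop : IsCoprime (∏ i ∈ Finset.range n, (X - C (i : k))) (X - C (n : k)) := by
      refine IsCoprime.prod_left fun i hi => ?_
      refine isCoprime_X_sub_C_of_isUnit_sub ?_
      have hne : (i : k) ≠ (n : k) := by
        have : i ≠ n := (Finset.mem_range.mp hi).ne
        exact_mod_cast this
      exact (sub_ne_zero_of_ne hne).isUnit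
    rw [Finset.prod_range_succ, ← Polynomial.sup_ker_aeval_eq_ker_aeval_mul_of_coprime H hcop]
    refine sup_le ih ?_
    intro v hv
    have hv' : H v = (n : k) • v := by
      have h0 : (aeval H (X - C (n : k))) v = 0 := hv
      rw [map_sub, aeval_X, aeval_C, LinearMap.sub_apply, Module.algebraMap_end_apply,
        sub_eq_zero] at h0
      exact h0
    have hmem : v ∈ Module.End.eigenspace H (((n : ℤ) : k)) := by
      rw [Module.End.mem_eigenspace_iff]
      simpa using hv'
    exact Submodule.mem_iSup_of_mem (n : ℤ)
      (Submodule.mem_iSup_of_mem (Int.natCast_nonneg n) hmem)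

/-- For a finite-dimensional representation `V` of `sl₂` over a field of characteristic
zero, the kernel of the action of `e` is contained in the sum of the `h`-weight spaces
`V(μ)` with `μ ≥ 0` (weights being integers, cast into `k`). -/
theorem sl2_ker_e_le_nonneg_weights
    {k L V : Type*} [Field k] [CharZero k]
    [LieRing L] [LieAlgebra k L]
    [AddCommGroup V] [Module k V] [LieRingModule L V] [LieModule k L V]
    [FiniteDimensional k V]
    {h e f : L} (ht : IsSl2Triple h e f) :
    LinearMap.ker (LieModule.toEnd k L V e) ≤
      ⨆ μ : ℤ, ⨆ _ : 0 ≤ μ,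
        Module.End.eigenspace (LieModule.toEnd k L V h) (μ : k) := by
  classical
  set E := LieModule.toEnd k L V e with hE
  set F := LieModule.toEnd k L V f with hF
  set H := LieModule.toEnd k L V h with hH
  -- the basic relations among the endomorphisms
  have rel1 : H * E - E * H = (2 : k) • E := by
    have h1 : (⁅H, E⁆ : Module.End k V) = (2 : k) • E := by
      rw [hH, hE, ← LieHom.map_lie, ht.lie_h_e_smul k, map_smul]
    rw [← h1, Ring.lie_def]
  have hEF : E * F = F * E + H := by
    have h1 : (⁅E, F⁆ : Module.End k V) = H := by
      rw [hE, hF, hH, ← LieHom.map_lie, ht.lie_e_f]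
    rw [Ring.lie_def] at h1
    rw [← h1]; abel
  have hHF : H * F = F * H - (2 : k) • F := by
    have h1 : (⁅H, F⁆ : Module.End k V) = -((2 : k) • F) := by
      rw [hH, hF, ← LieHom.map_lie, ht.lie_lie_smul_f k, map_neg, map_smul]
    rw [Ring.lie_def] at h1
    rw [eq_add_of_sub_eq h1]
    abel
  -- `F` is nilpotent
  have hFnil : ∃ N : ℕ, F ^ N = 0 := by
    by_contra! contra
    have hinj : Function.Injective (fun n : ℕ => (-(2 * n) : k)) := by
      intro n m hnm
      have h2 : (2 : k) * n = 2 * m := neg_injective hnm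
      have h3 : (n : k) = m := mul_left_cancel₀ two_ne_zero h2
      exact_mod_cast h3
    have hs : (Set.range fun n : ℕ => (-(2 * n) : k)).Infinite := by
      rw [Set.infinite_range_iff hinj]
      infer_instance
    set T : Module.End k (Module.End k V) :=
      LinearMap.mulLeft k H - LinearMap.mulRight k H with hT
    have hTeig : ∀ n : ℕ, T (F ^ n) = (-(2 * n) : k) • F ^ n := by
      intro n
      have h4 := sl2_aux_HF hHF n
      simp only [hT, LinearMap.sub_apply, LinearMap.mulLeft_apply, LinearMap.mulRight_apply]
      rw [h4]
      module
    exact hs ((T.eigenvectors_linearIndependent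
      {μ : k | ∃ n : ℕ, (-(2 * n) : k) = μ}
      (fun s => F ^ Classical.choose s.property)
      (fun s => by
        rw [Module.End.hasEigenvector_iff, Module.End.mem_eigenspace_iff]
        exact ⟨by rw [hTeig, Classical.choose_spec s.property], contra _⟩)).finite)
  -- the key computation
  have key : ∀ n : ℕ, ∀ v : V, E v = 0 →
      (E ^ n) ((F ^ n) v) =
        (Nat.factorial n : k) • (aeval H (∏ i ∈ Finset.range n, (X - C (i : k)))) v := by
    intro n
    induction n with
    | zero => intro v _; simp
    | succ n ih =>
      intro v hv
      set w : V := H v - (n : k) • v with hw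
      have hEw : E w = 0 := by
        have h2 := congrArg (fun T : Module.End k V => T v) rel1
        simp only [LinearMap.sub_apply, Module.End.mul_apply, LinearMap.smul_apply, hv, map_zero,
          smul_zero, zero_sub, neg_eq_zero] at h2
        rw [hw, map_sub, map_smul, h2, hv, smul_zero, sub_zero]
      have step : E ((F ^ (n + 1)) v) = ((n : k) + 1) • (F ^ n) w := by
        have h3 := congrArg (fun T : Module.End k V => T v) (sl2_aux_comm hEF hHF n)
        simp only [Module.End.mul_apply, LinearMap.add_apply, LinearMap.smul_apply,
          LinearMap.sub_apply, Module.End.one_apply, hv, map_zero] at h3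
        rw [hw]
        rw [h3, zero_add]
      calc (E ^ (n + 1)) ((F ^ (n + 1)) v)
          = (E ^ n) (E ((F ^ (n + 1)) v)) := by
            rw [pow_succ, Module.End.mul_apply]
        _ = ((n : k) + 1) • (E ^ n) ((F ^ n) w) := by rw [step, map_smul]
        _ = ((n : k) + 1) • ((Nat.factorial n : k) •
              (aeval H (∏ i ∈ Finset.range n, (X - C (i : k)))) w) := by rw [ih w hEw]
        _ = (Nat.factorial (n + 1) : k) •
              (aeval H (∏ i ∈ Finset.range (n + 1), (X - C (i : k)))) v := by
            rw [Finset.prod_range_succ, map_mul, Module.End.mul_apply]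
            have hwv : (aeval H (X - C (n : k))) v = w := by
              rw [map_sub, aeval_X, aeval_C, LinearMap.sub_apply, Module.algebraMap_end_apply, hw]
            rw [hwv, smul_smul]
            congr 1
            push_cast [Nat.factorial_succ]
            ring
  -- conclusion
  obtain ⟨N, hN⟩ := hFnil
  intro v hv
  have hv0 : E v = 0 := hv
  have h0 : (Nat.factorial N : k) •
      (aeval H (∏ i ∈ Finset.range N, (X - C (i : k)))) v = 0 := by
    rw [← key N v hv0, hN]
    simp
  have hfac : (Nat.factorial N : k) ≠ 0 := by exact_mod_cast Nat.factorial_ne_zero N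
  rw [smul_eq_zero] at h0
  have h1 : (aeval H (∏ i ∈ Finset.range N, (X - C (i : k)))) v = 0 := h0.resolve_left hfac
  exact sl2_aux_ker_prod H N (LinearMap.mem_ker.mpr h1)
end

section
/- Let E be a real inner product space, S a finite set of vectors of E, and P = {μ ∈ E | ⟨β, μ⟩ ≥ 1 for all β ∈ S}. Suppose λ ∈ P has minimal norm among elements of P, i.e. ‖λ‖ ≤ ‖μ‖ for all μ ∈ P. Then for every η ∈ E with ⟨β, η⟩ ≥ 0 for all β ∈ S, one has ⟨λ, η⟩ ≥ 0. -/
open RealInnerProductSpace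

/-- If `λ` is a minimal-norm point of `P = {μ | ⟨β, μ⟩ ≥ 1 for all β ∈ S}` for a finite
set `S`, then `⟨λ, η⟩ ≥ 0` for every `η` with `⟨β, η⟩ ≥ 0` for all `β ∈ S`. -/
theorem inner_nonneg_of_min_norm
    {E : Type*} [NormedAddCommGroup E] [InnerProductSpace ℝ E]
    (S : Finset E) {lam : E}
    (hlam : ∀ β ∈ S, 1 ≤ ⟪β, lam⟫)
    (hmin : ∀ μ : E, (∀ β ∈ S, 1 ≤ ⟪β, μ⟫) → ‖lam‖ ≤ ‖μ‖)
    {η : E} (hη : ∀ β ∈ S, 0 ≤ ⟪β, η⟫) :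
    0 ≤ ⟪lam, η⟫ := by
  by_contra h
  push_neg at h
  set c : ℝ := ⟪lam, η⟫ with hc
  have hη0 : η ≠ 0 := by
    rintro rfl
    simp [hc, inner_zero_right] at h
  have hn : (0:ℝ) < ‖η‖ ^ 2 := by
    have := norm_pos_iff.mpr hη0
    positivity
  set t : ℝ := -c / ‖η‖ ^ 2 with ht
  have ht0 : 0 < t := by
    apply div_pos (by linarith) hn
  -- μ = lam + t • η is in P
  have hmem : ∀ β ∈ S, 1 ≤ ⟪β, lam + t • η⟫ := by
    intro β hβ
    rw [inner_add_right, inner_smul_right]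
    have := hη β hβ
    have := hlam β hβ
    nlinarith
  have hle := hmin _ hmem
  have hsq : ‖lam‖ ^ 2 ≤ ‖lam + t • η‖ ^ 2 := by
    have := norm_nonneg lam
    nlinarith
  have hexp : ‖lam + t • η‖ ^ 2 = ‖lam‖ ^ 2 + 2 * t * c + t ^ 2 * ‖η‖ ^ 2 := by
    rw [norm_add_sq_real, real_inner_smul_right, norm_smul, mul_pow]
    simp [abs_of_pos ht0, hc]
    ring
  have htc : t * ‖η‖ ^ 2 = -c := by
    rw [ht, div_mul_cancel₀ _ hn.ne']
  nlinarith
end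

section
/- Let q be a prime power and m ≥ 1 an integer. Let F = 𝔽_q((ϖ)) with ring of integers o_F = 𝔽_q[[ϖ]] and maximal ideal 𝔭_F = (ϖ), and let F' be a finite extension of ℚ_p (p the characteristic of 𝔽_q) with residue field 𝔽_q and ramification index ≥ m, with ring of integers o_{F'} and maximal ideal 𝔭_{F'}. Then the truncated rings o_F/𝔭_F^m and o_{F'}/𝔭_{F'}^m are isomorphic as rings. -/
universe u v

private theorem ringHom_ext_ulift_zmod {n : ℕ} {S : Type*} [Semiring S]
    (f g : ULift.{u} (ZMod n) →+* S) : f = g := by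
  have h : f.comp ((ULift.ringEquiv (R := ZMod n)).symm.toRingHom) =
      g.comp ((ULift.ringEquiv (R := ZMod n)).symm.toRingHom) := RingHom.ext_zmod _ _
  ext x
  have hx : (ULift.ringEquiv (R := ZMod n)).symm x.down = x := rfl
  have := RingHom.congr_fun h x.down
  simpa [hx] using this

/-- If `A → K` is a surjective ring hom onto a finite field with nilpotent kernel, and `A` has
the same (prime) characteristic `p` as `K`, then the surjection admits a ring-hom section
(a Teichmüller-type coefficient field). -/
private theorem exists_ringHom_section {p : ℕ} (hp : p.Prime)
    {K : Type u} [Field K] [Finite K] [CharP K p]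
    {A : Type v} [CommRing A] [CharP A p]
    (g : A →+* K) (hg : Function.Surjective g) (hnil : IsNilpotent (RingHom.ker g)) :
    ∃ s : K →+* A, ∀ x, g (s x) = x := by
  haveI : Fact p.Prime := ⟨hp⟩
  let R : Type max u v := ULift.{max u v} (ZMod p)
  let K' : Type max u v := ULift.{v} K
  let A' : Type max u v := ULift.{u} A
  let eR : R ≃+* ZMod p := ULift.ringEquiv
  let eK : K' ≃+* K := ULift.ringEquiv
  let eA : A' ≃+* A := ULift.ringEquiv
  haveI : CharP K' p := ULift.charP (R := K) p
  haveI : CharP A' p := ULift.charP (R := A) p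
  letI : Algebra (ZMod p) K' := ZMod.algebra K' p
  letI : Algebra (ZMod p) A' := ZMod.algebra A' p
  letI : Algebra R K' := ((algebraMap (ZMod p) K').comp eR.toRingHom).toAlgebra
  letI : Algebra R A' := ((algebraMap (ZMod p) A').comp eR.toRingHom).toAlgebra
  haveI : PerfectField R := PerfectField.ofFinite
  haveI : Module.Finite R K' := Module.Finite.of_finite
  haveI : Algebra.IsAlgebraic R K' := Algebra.IsAlgebraic.of_finite _ _
  haveI : Algebra.IsSeparable R K' := Algebra.IsAlgebraic.isSeparable_of_perfectField
  haveI : Algebra.FormallyEtale R K' := Algebra.FormallyEtale.of_isSeparable R K'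
  -- transfer `g` to the common universe
  let gR : A' →+* K' := (eK.symm.toRingHom.comp g).comp eA.toRingHom
  let gA : A' →ₐ[R] K' :=
    { toRingHom := gR
      commutes' := fun r =>
        RingHom.congr_fun
          (ringHom_ext_ulift_zmod (gR.comp (algebraMap R A')) (algebraMap R K')) r }
  have hgR : Function.Surjective gR := by
    intro y
    obtain ⟨a, ha⟩ := hg (eK y)
    exact ⟨eA.symm a, by simp [gR, ha]⟩
  have hkergR : RingHom.ker gR = Ideal.map eA.symm (RingHom.ker g) := by
    rw [← Ideal.comap_symm (I := RingHom.ker g) eA.symm, RingEquiv.symm_symm]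
    ext x
    simp only [RingHom.mem_ker, Ideal.mem_comap]
    constructor
    · intro h
      have : eK (gR x) = eK 0 := by rw [h]
      simpa [gR] using this
    · intro h
      show eK.symm (g (eA x)) = 0
      rw [h]
      simp
  have hnilR : IsNilpotent (RingHom.ker gR) := by
    obtain ⟨n, hn⟩ := hnil
    refine ⟨n, ?_⟩
    show RingHom.ker gR ^ n = ⊥
    have hn' : RingHom.ker g ^ n = ⊥ := hn
    rw [hkergR, ← Ideal.map_pow, hn', Ideal.map_bot]
  have hnilR' : IsNilpotent (RingHom.ker (gA : A' →+* K')) := hnilR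
  let s' : K' →ₐ[R] A' :=
    Algebra.FormallySmooth.liftOfSurjective (AlgHom.id R K') gA hgR hnilR'
  have hs' : ∀ x, gR (s' x) = x := fun x =>
    Algebra.FormallySmooth.liftOfSurjective_apply (AlgHom.id R K') gA hgR hnilR' x
  refine ⟨(eA.toRingHom.comp s'.toRingHom).comp eK.symm.toRingHom, fun x => ?_⟩
  have := hs' (eK.symm x)
  have h2 : eK (gR (s' (eK.symm x))) = eK (eK.symm x) := by rw [this]
  simpa [gR] using h2

/-- Close fields: let `K = 𝔽_q` be a finite field of characteristic `p` and `m ≥ 1`.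
The truncated ring `o_F/𝔭_F^m` for `F = 𝔽_q((ϖ))` (i.e. `K[[X]]/(X)^m`) is isomorphic
to `o_{F'}/𝔭_{F'}^m` for any finite extension `F'/ℚ_p` whose ring of integers `O` (a
characteristic-zero DVR) has residue field `𝔽_q` and ramification index `≥ m`
(i.e. `p ∈ 𝔭_{F'}^m`). -/
theorem truncated_rings_isomorphic_close_fields
    (p m : ℕ) (hp : p.Prime) (hm : 1 ≤ m)
    (K : Type*) [Field K] [Fintype K] [CharP K p]
    (O : Type*) [CommRing O] [IsDomain O] [IsDiscreteValuationRing O] [CharZero O]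
    (hres : Nonempty (IsLocalRing.ResidueField O ≃+* K))
    (hram : (p : O) ∈ IsLocalRing.maximalIdeal O ^ m) :
    Nonempty
      ((PowerSeries K ⧸ (Ideal.span {(PowerSeries.X : PowerSeries K)}) ^ m) ≃+*
        (O ⧸ IsLocalRing.maximalIdeal O ^ m)) := by
  classical
  obtain ⟨m', rfl⟩ : ∃ m', m = m' + 1 := ⟨m - 1, by omega⟩
  set m := m' + 1 with hmdef
  obtain ⟨e⟩ := hres
  obtain ⟨ϖ, hϖ⟩ := IsDiscreteValuationRing.exists_irreducible O
  have hmax : IsLocalRing.maximalIdeal O = Ideal.span {ϖ} := hϖ.maximalIdeal_eq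
  set I : Ideal O := IsLocalRing.maximalIdeal O ^ m with hIdef
  set A := O ⧸ I with hAdef
  set mkA : O →+* A := Ideal.Quotient.mk I with hmkA
  have hIle : I ≤ IsLocalRing.maximalIdeal O := by
    simpa [hIdef] using Ideal.pow_le_self (I := IsLocalRing.maximalIdeal O) (n := m)
      (by omega)
  have hIne : I ≠ ⊤ := fun h =>
    (IsLocalRing.maximalIdeal.isMaximal O).ne_top (top_le_iff.mp (h ▸ hIle))
  haveI : Nontrivial A := Ideal.Quotient.nontrivial_iff.mpr hIne
  have hIspan : I = Ideal.span {ϖ ^ m} := by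
    rw [hIdef, hmax, Ideal.span_singleton_pow]
  -- characteristic p
  have hpA : (p : A) = 0 := by
    have : mkA (p : O) = 0 := Ideal.Quotient.eq_zero_iff_mem.mpr hram
    simpa using this
  haveI hA : CharP A p := (CharP.charP_iff_prime_eq_zero hp).mpr hpA
  -- the image of the uniformizer
  set t : A := mkA ϖ with htdef
  have ht : t ^ m = 0 := by
    rw [htdef, ← map_pow]
    exact Ideal.Quotient.eq_zero_iff_mem.mpr (hIspan ▸ Ideal.mem_span_singleton_self _)
  have htne : ∀ i < m, t ^ i ≠ 0 := by
    intro i hi h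
    rw [htdef, ← map_pow] at h
    have hmem : ϖ ^ i ∈ I := Ideal.Quotient.eq_zero_iff_mem.mp h
    rw [hIspan, Ideal.mem_span_singleton] at hmem
    have := (pow_dvd_pow_iff hϖ.ne_zero hϖ.not_isUnit).mp hmem
    omega
  -- the residue map of A
  have hresker : ∀ x ∈ I, (e.toRingHom.comp (IsLocalRing.residue O)) x = 0 := by
    intro x hx
    have : IsLocalRing.residue O x = 0 := Ideal.Quotient.eq_zero_iff_mem.mpr (hIle hx)
    simp [this]
  set resA : A →+* K := Ideal.Quotient.lift I (e.toRingHom.comp (IsLocalRing.residue O))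
    hresker with hresAdef
  have hresA_mk : ∀ x : O, resA (mkA x) = e (IsLocalRing.residue O x) := fun x => rfl
  have hsurjA : Function.Surjective resA := by
    intro y
    obtain ⟨x, hx⟩ := Ideal.Quotient.mk_surjective (I := IsLocalRing.maximalIdeal O) (e.symm y)
    exact ⟨mkA x, by
      rw [hresA_mk]
      show e _ = y
      rw [show IsLocalRing.residue O x = e.symm y from hx]
      simp⟩
  have hkermk : RingHom.ker resA = Ideal.span {t} := by
    have h1 : Ideal.comap mkA (RingHom.ker resA) = IsLocalRing.maximalIdeal O := by
      ext x
      simp only [Ideal.mem_comap, RingHom.mem_ker, hresA_mk]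
      rw [map_eq_zero_iff e e.injective]
      exact Ideal.Quotient.eq_zero_iff_mem
    have h2 : RingHom.ker resA = Ideal.map mkA (IsLocalRing.maximalIdeal O) := by
      rw [← h1, Ideal.map_comap_of_surjective mkA Ideal.Quotient.mk_surjective]
    rw [h2, hmax, Ideal.map_span, Set.image_singleton]
  haveI : IsLocalRing A := IsLocalRing.of_surjective' mkA Ideal.Quotient.mk_surjective
  have hmaxA : IsLocalRing.maximalIdeal A = RingHom.ker resA :=
    (IsLocalRing.eq_maximalIdeal (RingHom.ker_isMaximal_of_surjective resA hsurjA)).symm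
  have hunit : ∀ a : A, resA a ≠ 0 → IsUnit a := by
    intro a ha
    by_contra h
    exact ha (by
      have : a ∈ IsLocalRing.maximalIdeal A := h
      rw [hmaxA] at this
      exact this)
  have hnil : IsNilpotent (RingHom.ker resA) := by
    refine ⟨m, ?_⟩
    show RingHom.ker resA ^ m = ⊥
    rw [hkermk, Ideal.span_singleton_pow, Ideal.span_singleton_eq_bot]
    exact ht
  -- the Teichmüller-type section
  obtain ⟨s, hs⟩ := exists_ringHom_section hp resA hsurjA hnil
  -- the evaluation map from polynomials
  set ψ : Polynomial K →+* A := Polynomial.eval₂RingHom s t with hψdef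
  have hψ_apply : ∀ f : Polynomial K, ψ f = Polynomial.eval₂ s t f := fun _ => rfl
  -- surjectivity of ψ
  have key : ∀ k, ∀ a : A, ∃ f : Polynomial K, ∃ b : A, a = ψ f + t ^ k * b := by
    intro k
    induction k with
    | zero => exact fun a => ⟨0, a, by simp⟩
    | succ k ih =>
      intro a
      obtain ⟨f, b, rfl⟩ := ih a
      have hb : b - s (resA b) ∈ RingHom.ker resA := by
        simp [RingHom.mem_ker, hs]
      rw [hkermk, Ideal.mem_span_singleton] at hb
      obtain ⟨b', hb'⟩ := hb
      refine ⟨f + Polynomial.C (resA b) * Polynomial.X ^ k, b', ?_⟩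
      have hbb : b = s (resA b) + t * b' := by rw [← hb']; ring
      have hψc : ψ (Polynomial.C (resA b) * Polynomial.X ^ k) = s (resA b) * t ^ k := by
        rw [hψ_apply, Polynomial.eval₂_mul, Polynomial.eval₂_C, Polynomial.eval₂_X_pow]
      rw [map_add, hψc]
      conv_lhs => rw [hbb]
      ring
  have hψsurj : Function.Surjective ψ := by
    intro a
    obtain ⟨f, b, rfl⟩ := key m a
    exact ⟨f, by rw [ht, zero_mul, add_zero]⟩
  -- kernel control for ψ
  have hcoeff : ∀ f : Polynomial K, ψ f = 0 → ∀ i < m, f.coeff i = 0 := by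
    intro f hf
    by_contra hcon
    push_neg at hcon
    obtain ⟨j, hjm, hj⟩ := hcon
    have hfne : ∃ n, f.coeff n ≠ 0 := ⟨j, hj⟩
    obtain ⟨i, hi, him, hmin⟩ :
        ∃ i, f.coeff i ≠ 0 ∧ i ≤ j ∧ ∀ d < i, f.coeff d = 0 :=
      ⟨Nat.find hfne, Nat.find_spec hfne, Nat.find_min' hfne hj,
        fun d hd => by simpa using Nat.find_min hfne hd⟩
    have hdvd : (Polynomial.X : Polynomial K) ^ i ∣ f :=
      Polynomial.X_pow_dvd_iff.mpr fun d hd => hmin d hd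
    obtain ⟨g, hg⟩ := hdvd
    have hg0 : g.coeff 0 ≠ 0 := by
      have hcoe : (Polynomial.X ^ i * g).coeff i = g.coeff 0 := by
        simpa using Polynomial.coeff_X_pow_mul g i 0
      rw [hg] at hi
      rwa [hcoe] at hi
    have htk : resA t = 0 := by
      have h : t ∈ RingHom.ker resA := hkermk ▸ Ideal.mem_span_singleton_self t
      exact h
    have hres_g : resA (ψ g) = g.coeff 0 := by
      rw [hψ_apply, Polynomial.hom_eval₂, htk, Polynomial.eval₂_at_zero]
      exact hs _
    have hunit_g : IsUnit (ψ g) := hunit _ (by rw [hres_g]; exact hg0)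
    have hzero : t ^ i * ψ g = 0 := by
      rw [hg] at hf
      rw [← hf, hψ_apply (Polynomial.X ^ i * g), hψ_apply, Polynomial.eval₂_mul,
        Polynomial.eval₂_X_pow]
    have hti : t ^ i = 0 := by
      obtain ⟨u, hu⟩ := hunit_g
      have := congrArg (· * (↑u⁻¹ : A)) hzero
      simpa [← hu, mul_assoc] using this
    exact htne i (lt_of_le_of_lt him hjm) hti
  -- ψ only depends on coefficients below m
  have hψeq : ∀ a b : Polynomial K, (∀ i < m, a.coeff i = b.coeff i) → ψ a = ψ b := by
    intro a b h
    have hdvd : (Polynomial.X : Polynomial K) ^ m ∣ a - b :=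
      Polynomial.X_pow_dvd_iff.mpr fun d hd => by
        simp [Polynomial.coeff_sub, h d hd]
    obtain ⟨c, hc⟩ := hdvd
    have hab : a = b + Polynomial.X ^ m * c := by rw [← hc]; ring
    rw [hab, map_add, hψ_apply (Polynomial.X ^ m * c), Polynomial.eval₂_mul,
      Polynomial.eval₂_X_pow, ht, zero_mul, add_zero]
  -- the induced map from power series
  let Φ : PowerSeries K →+* A :=
    { toFun := fun f => ψ (PowerSeries.trunc m f)
      map_one' := by
        show ψ (PowerSeries.trunc (m' + 1) (1 : PowerSeries K)) = 1
        rw [PowerSeries.trunc_one, map_one]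
      map_mul' := by
        intro f g
        show ψ (PowerSeries.trunc m (f * g)) =
          ψ (PowerSeries.trunc m f) * ψ (PowerSeries.trunc m g)
        rw [← map_mul]
        apply hψeq
        intro i hi
        rw [PowerSeries.coeff_trunc, if_pos hi,
          PowerSeries.coeff_mul_eq_coeff_trunc_mul_trunc f g hi, ← Polynomial.coe_mul,
          Polynomial.coeff_coe]
      map_zero' := by
        show ψ (PowerSeries.trunc m 0) = 0
        rw [map_zero, map_zero]
      map_add' := by
        intro f g
        show ψ (PowerSeries.trunc m (f + g)) =
          ψ (PowerSeries.trunc m f) + ψ (PowerSeries.trunc m g)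
        rw [map_add, map_add] }
  have hΦ_apply : ∀ f : PowerSeries K, Φ f = ψ (PowerSeries.trunc m f) := fun _ => rfl
  have hΦcoe : ∀ f : Polynomial K, Φ (f : PowerSeries K) = ψ f := by
    intro f
    rw [hΦ_apply]
    apply hψeq
    intro i hi
    rw [PowerSeries.coeff_trunc, if_pos hi, Polynomial.coeff_coe]
  have hΦsurj : Function.Surjective Φ := by
    intro a
    obtain ⟨f, hf⟩ := hψsurj a
    exact ⟨(f : PowerSeries K), by rw [hΦcoe, hf]⟩
  have hkerΦ : RingHom.ker Φ = (Ideal.span {(PowerSeries.X : PowerSeries K)}) ^ m := by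
    rw [Ideal.span_singleton_pow]
    ext f
    simp only [RingHom.mem_ker, Ideal.mem_span_singleton]
    constructor
    · intro hf
      rw [hΦ_apply] at hf
      rw [PowerSeries.X_pow_dvd_iff]
      intro d hd
      have := hcoeff (PowerSeries.trunc m f) hf d hd
      rwa [PowerSeries.coeff_trunc, if_pos hd] at this
    · intro hdvd
      have hcz : ∀ d < m, (PowerSeries.coeff d) f = 0 := PowerSeries.X_pow_dvd_iff.mp hdvd
      rw [hΦ_apply, ← map_zero ψ]
      apply hψeq
      intro i hi
      rw [PowerSeries.coeff_trunc, if_pos hi, hcz i hi, Polynomial.coeff_zero]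
  exact ⟨(Ideal.quotEquivOfEq hkerΦ.symm).trans (RingHom.quotientKerEquivOfSurjective hΦsurj)⟩
end
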